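/- arXiv:2010.15345 — 2 statements merged into one kernel-verified Lean document; each statement's English description precedes it below -/
import Mathlib

section
/- (Corollary 2.5) Suppose k = 0 (so Υₙ = 1 for all n) and let f(z) = z + Σ_{n≥2} aₙ zⁿ belong to the class B_Σ(1, φ). Assume 3B₁²·C(δ,3) − 4(B₂−B₁)·C(δ,2)² ≠ 0. Then |a₂| ≤ B₁·√B₁ / √( |3B₁²·C(δ,3) − 4(B₂−B₁)·C(δ,2)²| ) and |a₃| ≤ B₁/(3C(δ,3)) + ( B₁/(2C(δ,2)) )². -/
open Complex

noncomputable section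

/-- The open unit disk in ℂ. -/
def unitDisk : Set ℂ := Metric.ball 0 1

/-- Υₙ = (λ(α+β−1)(n−1))^k. -/
def Ups (lam al be : ℝ) (k n : ℕ) : ℝ := (lam * (al + be - 1) * ((n : ℝ) - 1)) ^ k

/-- C(δ,n) = Γ(n+δ)/(Γ(n)·Γ(δ+1)). -/
def Cdel (d : ℝ) (n : ℕ) : ℝ :=
  Real.Gamma ((n : ℝ) + d) / (Real.Gamma (n : ℝ) * Real.Gamma (d + 1))

/-- The operator D applied to a function with Taylor coefficients `a`
(where `a 0 = 0`, `a 1 = 1`): (Df)(z) = z + Σ_{n≥2} Υₙ·C(δ,n)·aₙ zⁿ. -/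
def Dop (lam al be d : ℝ) (k : ℕ) (a : ℕ → ℂ) : ℂ → ℂ := fun z =>
  z + ∑' n : ℕ, if 2 ≤ n then (Ups lam al be k n : ℂ) * (Cdel d n : ℂ) * a n * z ^ n else 0

/-- Subordination F ≺ G on the unit disk. -/
def Subord (F G : ℂ → ℂ) : Prop :=
  ∃ u : ℂ → ℂ, AnalyticOnNhd ℂ u unitDisk ∧ u 0 = 0 ∧
    (∀ z ∈ unitDisk, ‖u z‖ < 1) ∧ ∀ z ∈ unitDisk, F z = G (u z)

/-- z ↦ (z·F′(z)/F(z))·((F(z)/z)^γ), with the value 1 at the origin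
(principal-branch complex power). -/
def bazFun (g : ℝ) (F : ℂ → ℂ) : ℂ → ℂ := fun z =>
  if z = 0 then 1 else (z * deriv F z / F z) * ((F z / z) ^ (g : ℂ))

/-- `f` is analytic on the unit disk, normalized, with Taylor coefficients `a`
(`a 0 = 0`, `a 1 = 1`). -/
def IsInA (f : ℂ → ℂ) (a : ℕ → ℂ) : Prop :=
  AnalyticOnNhd ℂ f unitDisk ∧ a 0 = 0 ∧ a 1 = 1 ∧
    ∀ z ∈ unitDisk, HasSum (fun n => a n * z ^ n) (f z)

/-- Membership of `f` (with coefficients `a`, and inverse `g` with coefficients `b`)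
in the class B_Σ(γ, φ). -/
def MemB (lam al be d : ℝ) (k : ℕ) (g : ℝ) (φ : ℂ → ℂ)
    (f gf : ℂ → ℂ) (a b : ℕ → ℂ) : Prop :=
  IsInA f a ∧ Set.InjOn f unitDisk ∧
  IsInA gf b ∧ Set.InjOn gf unitDisk ∧
  (∀ w : ℂ, ‖w‖ < 1 / 4 → f (gf w) = w) ∧
  b 2 = -a 2 ∧ b 3 = 2 * a 2 ^ 2 - a 3 ∧
  (∀ z ∈ unitDisk, z ≠ 0 → Dop lam al be d k a z ≠ 0) ∧
  (∀ z ∈ unitDisk, z ≠ 0 → Dop lam al be d k b z ≠ 0) ∧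
  Subord (bazFun g (Dop lam al be d k a)) φ ∧
  Subord (bazFun g (Dop lam al be d k b)) φ

open Metric Filter

/-! ### Auxiliary lemmas -/

lemma hasFPS_of_hasSum {F : ℂ → ℂ} {A : ℕ → ℂ}
    (h : ∀ z ∈ ball (0:ℂ) 1, HasSum (fun n => A n * z ^ n) (F z)) :
    HasFPowerSeriesOnBall F (FormalMultilinearSeries.ofScalars ℂ A) 0 1 := by
  refine ⟨?_, one_pos, ?_⟩
  · refine ENNReal.le_of_forall_nnreal_lt fun r hr => ?_
    have hr1 : (r : ℝ) < 1 := by exact_mod_cast hr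
    have hz : ((r : ℝ) : ℂ) ∈ ball (0:ℂ) 1 := by
      simp [Complex.norm_real, _root_.abs_of_nonneg r.coe_nonneg, hr1]
    have := (h _ hz).summable.tendsto_atTop_zero.norm
    refine FormalMultilinearSeries.le_radius_of_tendsto _ (l := 0) ?_
    rw [show (0:ℝ) = ‖(0:ℂ)‖ by simp]
    convert this using 2 with n
    rw [FormalMultilinearSeries.ofScalars_norm, norm_mul, norm_pow,
      Complex.norm_real, Real.norm_eq_abs, _root_.abs_of_nonneg r.coe_nonneg]
  · intro y hy
    have hy' : y ∈ ball (0:ℂ) 1 := by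
      rw [Metric.mem_eball, edist_dist, ENNReal.ofReal_lt_one] at hy; exact hy
    have := h y hy'
    simp only [zero_add]
    convert this using 1
    · rfl
    funext n
    rw [FormalMultilinearSeries.ofScalars_apply_eq, smul_eq_mul]

lemma iteratedDeriv_of_hasSum {F : ℂ → ℂ} {A : ℕ → ℂ}
    (h : ∀ z ∈ ball (0:ℂ) 1, HasSum (fun n => A n * z ^ n) (F z)) (n : ℕ) :
    iteratedDeriv n F 0 = (n.factorial : ℂ) * A n := by
  have H := (hasFPS_of_hasSum h).factorial_smul (1 : ℂ) n
  rw [iteratedDeriv_eq_iteratedFDeriv, ← H, FormalMultilinearSeries.ofScalars_apply_eq]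
  simp [nsmul_eq_mul, mul_comm]

lemma mobius_sq_identity (a w : ℂ) :
    Complex.normSq (1 - (starRingEnd ℂ) a * w) - Complex.normSq (w - a)
      = (1 - Complex.normSq a) * (1 - Complex.normSq w) := by
  simp only [Complex.normSq_apply, Complex.sub_re, Complex.sub_im, Complex.mul_re, Complex.mul_im,
    Complex.one_re, Complex.one_im, Complex.conj_re, Complex.conj_im]
  ring

lemma schwarz_pick_zero {h : ℂ → ℂ} (hd : DifferentiableOn ℂ h (ball (0:ℂ) 1))
    (hb : ∀ z ∈ ball (0:ℂ) 1, ‖h z‖ ≤ 1) :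
    ‖deriv h 0‖ ≤ 1 - ‖h 0‖ ^ 2 := by
  have h0mem : (0:ℂ) ∈ ball (0:ℂ) 1 := by simp
  have habs : ‖h 0‖ ≤ 1 := hb 0 h0mem
  rcases eq_or_lt_of_le habs with heq | hlt
  · -- |h 0| = 1 : max principle, h constant
    have hmax : IsMaxOn (norm ∘ h) (ball (0:ℂ) 1) 0 := by
      intro z hz
      simpa [heq] using hb z hz
    have hconst := Complex.eqOn_of_isPreconnected_of_isMaxOn_norm
      (convex_ball (0:ℂ) 1).isPreconnected isOpen_ball hd h0mem hmax
    have hev : h =ᶠ[nhds (0:ℂ)] fun _ => h 0 :=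
      Filter.eventuallyEq_of_mem (isOpen_ball.mem_nhds h0mem) hconst
    rw [hev.deriv_eq, deriv_const]
    simp [heq]
  · -- |h 0| < 1
    set a := h 0 with ha
    have hns : Complex.normSq a < 1 := by
      rw [← Complex.sq_norm]; nlinarith [norm_nonneg a]
    have hD0 : (0:ℝ) < 1 - Complex.normSq a := by linarith
    have hden : ∀ z ∈ ball (0:ℂ) 1, (1 - (starRingEnd ℂ) a * h z) ≠ 0 := by
      intro z hz hc
      have h1 : (starRingEnd ℂ) a * h z = 1 := by linear_combination -hc
      have := congrArg norm h1
      rw [norm_mul, norm_one, Complex.norm_conj] at this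
      nlinarith [hb z hz, norm_nonneg (h z), norm_nonneg a]
    set g : ℂ → ℂ := fun z => (h z - a) / (1 - (starRingEnd ℂ) a * h z) with hg
    have hgd : DifferentiableOn ℂ g (ball (0:ℂ) 1) := by
      apply DifferentiableOn.div
      · exact hd.sub (differentiableOn_const _)
      · exact (differentiableOn_const _).sub ((differentiableOn_const _).mul hd)
      · exact hden
    have hg0 : g 0 = 0 := by simp [hg, ← ha]
    have hgb : ∀ z ∈ ball (0:ℂ) 1, ‖g z‖ ≤ 1 := by
      intro z hz
      have key := mobius_sq_identity a (h z)
      have h2 : Complex.normSq (h z) ≤ 1 := by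
        rw [← Complex.sq_norm]; nlinarith [hb z hz, norm_nonneg (h z)]
      have hle : Complex.normSq (h z - a) ≤ Complex.normSq (1 - (starRingEnd ℂ) a * h z) := by
        nlinarith
      rw [hg, norm_div, div_le_one (norm_pos_iff.mpr (hden z hz))]
      calc ‖h z - a‖ = Real.sqrt (Complex.normSq (h z - a)) := by
              rw [Complex.norm_def]
          _ ≤ Real.sqrt (Complex.normSq (1 - (starRingEnd ℂ) a * h z)) := Real.sqrt_le_sqrt hle
          _ = _ := by rw [Complex.norm_def]
    -- derivative of g at 0
    have hhd : HasDerivAt h (deriv h 0) 0 :=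
      (hd.differentiableAt (isOpen_ball.mem_nhds h0mem)).hasDerivAt
    have hN : HasDerivAt (fun z => h z - a) (deriv h 0) 0 := hhd.sub_const a
    have hD : HasDerivAt (fun z => 1 - (starRingEnd ℂ) a * h z)
        (-((starRingEnd ℂ) a * deriv h 0)) 0 := by
      simpa using ((hhd.const_mul ((starRingEnd ℂ) a)).const_sub 1)
    have hDne : (1 - (starRingEnd ℂ) a * h 0) ≠ 0 := hden 0 h0mem
    have hGd : HasDerivAt g ((deriv h 0 * (1 - (starRingEnd ℂ) a * h 0) -
        (h 0 - a) * -((starRingEnd ℂ) a * deriv h 0)) / (1 - (starRingEnd ℂ) a * h 0) ^ 2) 0 :=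
      hN.div hD hDne
    have hDval : (1 - (starRingEnd ℂ) a * h 0) = ((1 - Complex.normSq a : ℝ) : ℂ) := by
      rw [show (starRingEnd ℂ) a * h 0 = ((Complex.normSq a : ℝ) : ℂ) by
        rw [← ha, mul_comm, Complex.mul_conj]]
      push_cast
      ring
    have hderivg : deriv g 0 = deriv h 0 / ((1 - Complex.normSq a : ℝ) : ℂ) := by
      have hne : ((1 - Complex.normSq a : ℝ) : ℂ) ≠ 0 := by
        exact_mod_cast hD0.ne'
      rw [hGd.deriv, hDval]
      simp only [← ha, sub_self, zero_mul, mul_zero, sub_zero]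
      rw [pow_two, mul_div_mul_right _ _ hne]
    -- Schwarz bound on deriv g 0
    have hbound : ‖deriv g 0‖ ≤ 1 := by
      refine le_of_forall_pos_le_add fun ε hε => ?_
      have hmaps : Set.MapsTo g (ball (0:ℂ) 1) (ball (g 0) (1 + ε)) := by
        intro z hz
        rw [mem_ball, hg0, dist_zero_right]
        exact lt_of_le_of_lt (hgb z hz) (by linarith)
      have := Complex.norm_dslope_le_div_of_mapsTo_ball hgd (hmaps.mono_right ball_subset_closedBall) h0mem
      rw [dslope_same] at this
      simpa using this
    rw [hderivg] at hbound
    rw [norm_div, Complex.norm_real, Real.norm_eq_abs, abs_of_pos hD0, div_le_one hD0] at hbound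
    rw [Complex.sq_norm]
    exact hbound

lemma schwarz_coeffs {u : ℂ → ℂ} (hu : AnalyticOnNhd ℂ u (ball (0:ℂ) 1)) (hu0 : u 0 = 0)
    (hub : ∀ z ∈ ball (0:ℂ) 1, ‖u z‖ < 1) :
    ‖deriv u 0‖ ≤ 1 ∧
      ‖deriv (deriv u) 0‖ ≤ 2 * (1 - ‖deriv u 0‖ ^ 2) := by
  have h0mem : (0:ℂ) ∈ ball (0:ℂ) 1 := by simp
  have hd : DifferentiableOn ℂ u (ball (0:ℂ) 1) := hu.differentiableOn
  set h : ℂ → ℂ := dslope u 0 with hh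
  have hdiff : DifferentiableOn ℂ h (ball (0:ℂ) 1) :=
    (differentiableOn_dslope (ball_mem_nhds _ one_pos)).mpr hd
  have hmaps : Set.MapsTo u (ball (0:ℂ) 1) (ball (u 0) 1) := by
    intro z hz
    rw [mem_ball, hu0, dist_zero_right]
    exact hub z hz
  have hb : ∀ z ∈ ball (0:ℂ) 1, ‖h z‖ ≤ 1 := by
    intro z hz
    have := Complex.norm_dslope_le_div_of_mapsTo_ball hd (hmaps.mono_right ball_subset_closedBall) hz
    simpa using this
  have hh0 : h 0 = deriv u 0 := dslope_same u 0
  have hc1 : ‖deriv u 0‖ ≤ 1 := by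
    have := hb 0 h0mem
    rwa [hh0] at this
  refine ⟨hc1, ?_⟩
  have hfac : ∀ z : ℂ, u z = z * h z := by
    intro z
    rcases eq_or_ne z 0 with rfl | hz
    · simp [hu0]
    · rw [hh, dslope_of_ne u hz, slope_def_field]
      field_simp; rw [hu0]; ring
  have hanal : AnalyticOnNhd ℂ h (ball (0:ℂ) 1) := hdiff.analyticOnNhd isOpen_ball
  have hdh : DifferentiableAt ℂ (deriv h) 0 :=
    ((hanal.deriv 0 h0mem).differentiableAt)
  have hderiv_u : ∀ z ∈ ball (0:ℂ) 1, deriv u z = h z + z * deriv h z := by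
    intro z hz
    have hhz : HasDerivAt h (deriv h z) z :=
      (hdiff.differentiableAt (isOpen_ball.mem_nhds hz)).hasDerivAt
    have : HasDerivAt (fun w => w * h w) (1 * h z + z * deriv h z) z :=
      (hasDerivAt_id z).mul hhz
    have hueq : u = fun w => w * h w := funext hfac
    rw [hueq]
    rw [this.deriv]
    ring
  have hev : deriv u =ᶠ[nhds (0:ℂ)] fun z => h z + z * deriv h z :=
    Filter.eventuallyEq_of_mem (isOpen_ball.mem_nhds h0mem) hderiv_u
  have hdd : deriv (deriv u) 0 = 2 * deriv h 0 := by
    rw [hev.deriv_eq]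
    have hh0' : HasDerivAt h (deriv h 0) 0 :=
      (hdiff.differentiableAt (isOpen_ball.mem_nhds h0mem)).hasDerivAt
    have hdh0 : HasDerivAt (deriv h) (deriv (deriv h) 0) 0 := hdh.hasDerivAt
    have : HasDerivAt (fun z => h z + z * deriv h z)
        (deriv h 0 + (1 * deriv h 0 + 0 * deriv (deriv h) 0)) 0 :=
      hh0'.add ((hasDerivAt_id 0).mul hdh0)
    rw [this.deriv]
    ring
  rw [hdd, norm_mul]
  have := schwarz_pick_zero hdiff hb
  rw [hh0] at this
  simp only [Complex.norm_ofNat]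
  nlinarith [norm_nonneg (deriv h 0)]

lemma mem_eball_of_mem_ball {z : ℂ} (hz : z ∈ ball (0:ℂ) 1) : z ∈ Metric.eball (0:ℂ) 1 := by
  rw [Metric.mem_eball, edist_dist]
  rw [mem_ball] at hz
  exact_mod_cast ENNReal.ofReal_lt_one.mpr hz

lemma subord_coeffs {F φ u : ℂ → ℂ} {A : ℕ → ℂ} {B : ℕ → ℝ}
    (hFs : ∀ z ∈ ball (0:ℂ) 1, HasSum (fun n => A n * z ^ n) (F z))
    (hφ : AnalyticOnNhd ℂ φ (ball (0:ℂ) 1))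
    (hφs : ∀ z ∈ ball (0:ℂ) 1, HasSum (fun n => (B n : ℂ) * z ^ n) (φ z))
    (hu : AnalyticOnNhd ℂ u (ball (0:ℂ) 1)) (hu0 : u 0 = 0)
    (hub : ∀ z ∈ ball (0:ℂ) 1, ‖u z‖ < 1)
    (heq : ∀ z ∈ ball (0:ℂ) 1, z ≠ 0 → deriv F z = φ (u z)) :
    2 * A 2 = (B 1 : ℂ) * deriv u 0 ∧
      6 * A 3 = 2 * (B 2 : ℂ) * (deriv u 0) ^ 2 + (B 1 : ℂ) * deriv (deriv u) 0 := by
  have h0mem : (0:ℂ) ∈ ball (0:ℂ) 1 := by simp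
  have hF := hasFPS_of_hasSum hFs
  have hFanal : AnalyticOnNhd ℂ F (ball (0:ℂ) 1) := fun z hz =>
    hF.analyticAt_of_mem (mem_eball_of_mem_ball hz)
  have humem : ∀ z ∈ ball (0:ℂ) 1, u z ∈ ball (0:ℂ) 1 := by
    intro z hz; rw [mem_ball, dist_zero_right]; exact hub z hz
  set Q : ℂ → ℂ := φ ∘ u with hQ
  have hQanal : AnalyticOnNhd ℂ Q (ball (0:ℂ) 1) := fun z hz =>
    (hφ _ (humem z hz)).comp (hu z hz)
  have hPanal : AnalyticOnNhd ℂ (deriv F) (ball (0:ℂ) 1) := hFanal.deriv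
  have hP0 : deriv F 0 = Q 0 := by
    have h1 : Tendsto (deriv F) (nhdsWithin (0:ℂ) {(0:ℂ)}ᶜ) (nhds (deriv F 0)) :=
      ((hPanal 0 h0mem).continuousAt.tendsto).mono_left nhdsWithin_le_nhds
    have h2 : Tendsto (deriv F) (nhdsWithin (0:ℂ) {(0:ℂ)}ᶜ) (nhds (Q 0)) := by
      refine Tendsto.congr' ?_ (((hQanal 0 h0mem).continuousAt.tendsto).mono_left
        nhdsWithin_le_nhds)
      filter_upwards [self_mem_nhdsWithin,
        mem_nhdsWithin_of_mem_nhds (isOpen_ball.mem_nhds h0mem)] with z hz1 hz2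
      exact (heq z hz2 hz1).symm
    exact tendsto_nhds_unique h1 h2
  have hPQ : deriv F =ᶠ[nhds (0:ℂ)] Q := by
    filter_upwards [isOpen_ball.mem_nhds h0mem] with z hz
    rcases eq_or_ne z 0 with rfl | hzne
    · exact hP0
    · exact heq z hz hzne
  have hφ1 : deriv φ 0 = (B 1 : ℂ) := by
    have := iteratedDeriv_of_hasSum hφs 1
    rwa [iteratedDeriv_one, Nat.factorial_one, Nat.cast_one, one_mul] at this
  have hφ2 : deriv (deriv φ) 0 = 2 * (B 2 : ℂ) := by
    have := iteratedDeriv_of_hasSum hφs 2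
    rw [iteratedDeriv_succ, iteratedDeriv_one] at this
    rw [this]; norm_num
  have hQd : ∀ z ∈ ball (0:ℂ) 1, deriv Q z = deriv φ (u z) * deriv u z := by
    intro z hz
    have hφu : HasDerivAt φ (deriv φ (u z)) (u z) :=
      ((hφ _ (humem z hz)).differentiableAt).hasDerivAt
    have huz : HasDerivAt u (deriv u z) z := ((hu z hz).differentiableAt).hasDerivAt
    exact (hφu.comp z huz).deriv
  have hQ1 : deriv Q 0 = (B 1 : ℂ) * deriv u 0 := by
    rw [hQd 0 h0mem, hu0, hφ1]
  have hQev : deriv Q =ᶠ[nhds (0:ℂ)] fun z => deriv φ (u z) * deriv u z :=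
    Filter.eventuallyEq_of_mem (isOpen_ball.mem_nhds h0mem) hQd
  have hQ2 : deriv (deriv Q) 0 =
      2 * (B 2 : ℂ) * (deriv u 0) ^ 2 + (B 1 : ℂ) * deriv (deriv u) 0 := by
    rw [hQev.deriv_eq]
    have hφ'anal : AnalyticOnNhd ℂ (deriv φ) (ball (0:ℂ) 1) := hφ.deriv
    have h1 : HasDerivAt (fun z => deriv φ (u z)) (deriv (deriv φ) (u 0) * deriv u 0) 0 := by
      have ha : HasDerivAt (deriv φ) (deriv (deriv φ) (u 0)) (u 0) :=
        ((hφ'anal _ (humem 0 h0mem)).differentiableAt).hasDerivAt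
      have hb : HasDerivAt u (deriv u 0) 0 := ((hu 0 h0mem).differentiableAt).hasDerivAt
      exact ha.comp 0 hb
    have h2 : HasDerivAt (deriv u) (deriv (deriv u) 0) 0 :=
      ((hu.deriv 0 h0mem).differentiableAt).hasDerivAt
    have : deriv (fun z => deriv φ (u z) * deriv u z) 0 = _ := (h1.mul h2).deriv
    rw [this, hu0, hφ1, hφ2]
    ring
  have e1 : iteratedDeriv 1 (deriv F) 0 = iteratedDeriv 1 Q 0 := hPQ.iteratedDeriv_eq 1
  have e2 : iteratedDeriv 2 (deriv F) 0 = iteratedDeriv 2 Q 0 := hPQ.iteratedDeriv_eq 2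
  have f2 : iteratedDeriv 2 F 0 = iteratedDeriv 1 (deriv F) 0 := by
    rw [iteratedDeriv_succ', iteratedDeriv_one]
  have f3 : iteratedDeriv 3 F 0 = iteratedDeriv 2 (deriv F) 0 := by
    rw [iteratedDeriv_succ']
  have g2 : iteratedDeriv 1 Q 0 = (B 1 : ℂ) * deriv u 0 := by rw [iteratedDeriv_one, hQ1]
  have g3 : iteratedDeriv 2 Q 0 =
      2 * (B 2 : ℂ) * (deriv u 0) ^ 2 + (B 1 : ℂ) * deriv (deriv u) 0 := by
    rw [iteratedDeriv_succ, iteratedDeriv_one, hQ2]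
  have hA2 := iteratedDeriv_of_hasSum hFs 2
  have hA3 := iteratedDeriv_of_hasSum hFs 3
  constructor
  · have : (2 : ℂ) * A 2 = iteratedDeriv 2 F 0 := by rw [hA2]; norm_num
    rw [this, f2, e1, g2]
  · have : (6 : ℂ) * A 3 = iteratedDeriv 3 F 0 := by
      rw [hA3]; norm_num [Nat.factorial]
    rw [this, f3, e2, g3]

def dcoef (d : ℝ) (a : ℕ → ℂ) : ℕ → ℂ := fun n =>
  if n = 1 then 1 else if 2 ≤ n then (Cdel d n : ℂ) * a n else 0

lemma cdel_pos {d : ℝ} (hd : 0 ≤ d) {n : ℕ} (hn : 1 ≤ n) : 0 < Cdel d n := by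
  have h1 : (0:ℝ) < (n:ℝ) := by exact_mod_cast hn
  have h2 : (0:ℝ) < (n:ℝ) + d := by linarith
  have h3 : (0:ℝ) < d + 1 := by linarith
  exact div_pos (Real.Gamma_pos_of_pos h2)
    (mul_pos (Real.Gamma_pos_of_pos h1) (Real.Gamma_pos_of_pos h3))

lemma cdel_succ {d : ℝ} (hd : 0 ≤ d) {n : ℕ} (hn : 1 ≤ n) :
    Cdel d (n + 1) = Cdel d n * (((n:ℝ) + d) / n) := by
  have h1 : (0:ℝ) < (n:ℝ) := by exact_mod_cast hn
  have h2 : (0:ℝ) < (n:ℝ) + d := by linarith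
  unfold Cdel
  rw [show ((n + 1 : ℕ) : ℝ) = (n:ℝ) + 1 by push_cast; ring]
  rw [show (n:ℝ) + 1 + d = ((n:ℝ) + d) + 1 by ring]
  rw [Real.Gamma_add_one h2.ne', Real.Gamma_add_one h1.ne']
  field_simp

lemma summable_cdel_mul_pow {d : ℝ} (hd : 0 ≤ d) {t : ℝ} (ht0 : 0 < t) (ht1 : t < 1) :
    Summable (fun n : ℕ => Cdel d n * t ^ n) := by
  apply summable_of_ratio_test_tendsto_lt_one ht1
  · filter_upwards [eventually_ge_atTop 1] with n hn
    exact (mul_pos (cdel_pos hd hn) (pow_pos ht0 n)).ne'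
  · have key : ∀ᶠ n : ℕ in atTop,
        ‖Cdel d (n+1) * t ^ (n+1)‖ / ‖Cdel d n * t ^ n‖ = t * (1 + d / n) := by
      filter_upwards [eventually_ge_atTop 1] with n hn
      have h1 : (0:ℝ) < (n:ℝ) := by exact_mod_cast hn
      have hc := cdel_pos hd hn
      have hc' := cdel_pos hd (le_trans hn (Nat.le_succ n))
      rw [Real.norm_eq_abs, Real.norm_eq_abs,
        abs_of_pos (mul_pos hc' (pow_pos ht0 _)), abs_of_pos (mul_pos hc (pow_pos ht0 _)),
        cdel_succ hd hn, pow_succ]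
      field_simp
    refine Tendsto.congr' (Filter.EventuallyEq.symm key) ?_
    have h2 : Tendsto (fun n : ℕ => d / (n:ℝ)) atTop (nhds 0) :=
      tendsto_const_div_atTop_nhds_zero_nat d
    have h3 : Tendsto (fun n : ℕ => t * (1 + d / n)) atTop (nhds (t * (1 + 0))) :=
      tendsto_const_nhds.mul (tendsto_const_nhds.add h2)
    simpa using h3

lemma dop_hasSum {lam al be d : ℝ} (hd : 0 ≤ d) {f : ℂ → ℂ} {a : ℕ → ℂ}
    (hsum : ∀ z ∈ ball (0:ℂ) 1, HasSum (fun n => a n * z ^ n) (f z)) :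
    ∀ z ∈ ball (0:ℂ) 1, HasSum (fun n => dcoef d a n * z ^ n) (Dop lam al be d 0 a z) := by
  intro z hz
  rcases eq_or_ne z 0 with rfl | hzne
  · have h1 : Dop lam al be d 0 a 0 = 0 := by
      unfold Dop
      rw [zero_add]
      have hz0 : ∀ n : ℕ, (if 2 ≤ n then (Ups lam al be 0 n : ℂ) * (Cdel d n : ℂ) * a n
          * (0:ℂ) ^ n else 0) = 0 := by
        intro n
        split_ifs with h
        · rw [zero_pow (by omega : n ≠ 0)]; ring
        · rfl
      rw [tsum_congr hz0, tsum_zero]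
    rw [h1]
    convert hasSum_zero with n
    rcases Nat.lt_or_ge n 2 with h | h
    · interval_cases n <;> simp [dcoef]
    · have : n ≠ 0 := by omega
      simp [this]
  · rw [mem_ball, dist_zero_right] at hz
    set r : ℝ := ‖z‖ with hr
    have hr0 : 0 < r := norm_pos_iff.mpr hzne
    set ρ : ℝ := (1 + r) / 2 with hρ
    have hρ0 : 0 < ρ := by positivity
    have hρ1 : ρ < 1 := by rw [hρ]; linarith
    have hrρ : r < ρ := by rw [hρ]; linarith
    set t : ℝ := r / ρ with htdef
    have ht0 : 0 < t := div_pos hr0 hρ0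
    have ht1 : t < 1 := (div_lt_one hρ0).mpr hrρ
    have hρmem : ((ρ:ℝ) : ℂ) ∈ ball (0:ℂ) 1 := by
      simp [Complex.norm_real, abs_of_pos hρ0, hρ1]
    have hsum' := (hsum _ hρmem).summable
    have htend : Tendsto (fun n => ‖a n * ((ρ:ℝ):ℂ) ^ n‖) atTop (nhds 0) := by
      simpa using hsum'.tendsto_atTop_zero.norm
    obtain ⟨M, hM⟩ := htend.bddAbove_range
    have hMn : ∀ n, ‖a n‖ * ρ ^ n ≤ M := by
      intro n
      have := hM (Set.mem_range_self n)
      rwa [norm_mul, norm_pow, Complex.norm_real, Real.norm_eq_abs, abs_of_pos hρ0] at this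
    have hg : Summable (fun n : ℕ => M * (Cdel d n * t ^ n)) :=
      (summable_cdel_mul_pow hd ht0 ht1).mul_left M
    have hM0 : 0 ≤ M := le_trans (by positivity) (hMn 0)
    have hbound : ∀ n : ℕ,
        ‖(if 2 ≤ n then (Ups lam al be 0 n : ℂ) * (Cdel d n : ℂ) * a n * z ^ n else 0)‖
          ≤ M * (Cdel d n * t ^ n) := by
      intro n
      rcases le_or_gt 2 n with h | h
      · have hn1 : 1 ≤ n := by omega
        have hcd := cdel_pos hd hn1
        rw [if_pos h]
        have hU : (Ups lam al be 0 n : ℝ) = 1 := by simp [Ups]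
        rw [hU]
        push_cast
        rw [one_mul, norm_mul, norm_mul, norm_pow, Complex.norm_real, Real.norm_eq_abs,
          abs_of_pos hcd]
        have hzr : ‖z‖ = ρ * t := by
          rw [htdef]; field_simp; exact hr.symm
        rw [hzr, mul_pow]
        calc Cdel d n * ‖a n‖ * (ρ ^ n * t ^ n)
            = (‖a n‖ * ρ ^ n) * (Cdel d n * t ^ n) := by ring
          _ ≤ M * (Cdel d n * t ^ n) := by
              apply mul_le_mul_of_nonneg_right (hMn n)
              positivity
      · rw [if_neg (by omega)]
        simp only [norm_zero]
        have hcd0 : 0 ≤ Cdel d n := by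
          interval_cases n
          · simp [Cdel, Real.Gamma_zero]
          · exact (cdel_pos hd le_rfl).le
        exact mul_nonneg hM0 (mul_nonneg hcd0 (pow_nonneg ht0.le n))
    have hS : Summable
        (fun n : ℕ => (if 2 ≤ n then (Ups lam al be 0 n : ℂ) * (Cdel d n : ℂ) * a n * z ^ n
          else 0)) := Summable.of_norm_bounded hg hbound
    have h1 : HasSum (fun n : ℕ => (if n = 1 then z else 0)) z := hasSum_ite_eq 1 z
    have h2 := hS.hasSum
    have h3 := h1.add h2
    rw [Dop]
    convert h3 using 2 with n
    rcases Nat.lt_or_ge n 2 with h | h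
    · interval_cases n <;> simp [dcoef]
    · have hn1 : n ≠ 1 := by omega
      have hn0 : n ≠ 0 := by omega
      simp only [dcoef, if_neg hn1, if_pos h]
      have hU : (Ups lam al be 0 n : ℝ) = 1 := by simp [Ups]
      rw [hU]
      push_cast
      ring

set_option maxHeartbeats 1000000 in
theorem cor_2_5 (α β lam δ : ℝ)
    (hα0 : 0 < α) (hα1 : α ≤ 1) (hβ0 : 0 < β) (hβ1 : β ≤ 1)
    (hlam : 0 ≤ lam) (hδ : 0 ≤ δ)
    (B : ℕ → ℝ) (φ : ℂ → ℂ)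
    (hφ : AnalyticOnNhd ℂ φ unitDisk)
    (hφs : ∀ z ∈ unitDisk, HasSum (fun n => (B n : ℂ) * z ^ n) (φ z))
    (hB0 : B 0 = 1) (hB1 : 0 < B 1)
    (f g : ℂ → ℂ) (a b : ℕ → ℂ)
    (hmem : MemB lam α β δ 0 1 φ f g a b)
    (hden : 3 * B 1 ^ 2 * Cdel δ 3 - 4 * (B 2 - B 1) * Cdel δ 2 ^ 2 ≠ 0) :
    ‖a 2‖ ≤ B 1 * Real.sqrt (B 1) /
      Real.sqrt |3 * B 1 ^ 2 * Cdel δ 3 - 4 * (B 2 - B 1) * Cdel δ 2 ^ 2| ∧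
    ‖a 3‖ ≤ B 1 / (3 * Cdel δ 3) + (B 1 / (2 * Cdel δ 2)) ^ 2 := by
  obtain ⟨⟨hfA, ha0, ha1, hfs⟩, hfInj, ⟨hgA, hbb0, hbb1, hgs⟩, hgInj, hinv, hb2, hb3,
    hDa, hDb, hS1, hS2⟩ := hmem
  have hball : (unitDisk : Set ℂ) = ball (0:ℂ) 1 := rfl
  rw [hball] at hfs hgs hφ hφs hDa hDb
  obtain ⟨u, hu, hu0, hub, hueq⟩ := hS1
  obtain ⟨v, hv, hv0, hvb, hveq⟩ := hS2
  rw [hball] at hu hub hueq hv hvb hveq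
  have hFs := dop_hasSum (lam := lam) (al := α) (be := β) hδ hfs
  have hGs := dop_hasSum (lam := lam) (al := α) (be := β) hδ hgs
  -- deriv (Dop a) = φ ∘ u off 0
  have hequ : ∀ z ∈ ball (0:ℂ) 1, z ≠ 0 → deriv (Dop lam α β δ 0 a) z = φ (u z) := by
    intro z hz hzne
    have h := hueq z hz
    rw [bazFun] at h
    rw [if_neg hzne, Complex.ofReal_one, Complex.cpow_one] at h
    rw [← h]
    have hF := hDa z hz hzne
    field_simp
  have heqv : ∀ z ∈ ball (0:ℂ) 1, z ≠ 0 → deriv (Dop lam α β δ 0 b) z = φ (v z) := by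
    intro z hz hzne
    have h := hveq z hz
    rw [bazFun] at h
    rw [if_neg hzne, Complex.ofReal_one, Complex.cpow_one] at h
    rw [← h]
    have hF := hDb z hz hzne
    field_simp
  obtain ⟨hu1, hu2⟩ := subord_coeffs hFs hφ hφs hu hu0 hub hequ
  obtain ⟨hv1, hv2⟩ := subord_coeffs hGs hφ hφs hv hv0 hvb heqv
  obtain ⟨hsc1, hsc2⟩ := schwarz_coeffs hu hu0 hub
  obtain ⟨hsd1, hsd2⟩ := schwarz_coeffs hv hv0 hvb
  -- notation
  set c1 : ℂ := deriv u 0 with hc1def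
  set e : ℂ := deriv (deriv u) 0 with hedef
  set d1 : ℂ := deriv v 0 with hd1def
  set e' : ℂ := deriv (deriv v) 0 with he'def
  set C2 : ℝ := Cdel δ 2 with hC2def
  set C3 : ℝ := Cdel δ 3 with hC3def
  have hC2 : 0 < C2 := cdel_pos hδ (by norm_num)
  have hC3 : 0 < C3 := cdel_pos hδ (by norm_num)
  have hdc2 : dcoef δ a 2 = (C2 : ℂ) * a 2 := by simp [dcoef, hC2def]
  have hdc3 : dcoef δ a 3 = (C3 : ℂ) * a 3 := by simp [dcoef, hC3def]
  have hdcb2 : dcoef δ b 2 = (C2 : ℂ) * b 2 := by simp [dcoef, hC2def]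
  have hdcb3 : dcoef δ b 3 = (C3 : ℂ) * b 3 := by simp [dcoef, hC3def]
  rw [hdc2] at hu1
  rw [hdc3] at hu2
  rw [hdcb2, hb2] at hv1
  rw [hdcb3, hb3] at hv2
  -- hu1 : 2 * (C2 * a 2) = B1 * c1
  -- hv1 : 2 * (C2 * -a 2) = B1 * d1
  have hB1ne : ((B 1 : ℝ) : ℂ) ≠ 0 := by
    exact_mod_cast hB1.ne'
  have hd1eq : d1 = -c1 := by
    have : ((B 1 : ℝ) : ℂ) * d1 = ((B 1 : ℝ) : ℂ) * (-c1) := by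
      linear_combination -hv1 - hu1
    exact mul_left_cancel₀ hB1ne this
  have hd1sq : d1 ^ 2 = c1 ^ 2 := by rw [hd1eq]; ring
  have hc1sq : ((B 1 : ℝ) : ℂ) ^ 2 * c1 ^ 2 = 4 * (C2:ℂ) ^ 2 * (a 2) ^ 2 := by
    linear_combination -(((B 1 : ℝ) : ℂ) * c1 + 2 * (C2:ℂ) * a 2) * hu1
  -- key identity for a 2
  set Dr : ℝ := 3 * B 1 ^ 2 * C3 - 4 * (B 2 - B 1) * C2 ^ 2 with hDrdef
  have hkey : 4 * ((Dr : ℝ) : ℂ) * (a 2) ^ 2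
      = ((B 1 : ℝ) : ℂ) ^ 3 * ((e + 2 * c1 ^ 2) + (e' + 2 * d1 ^ 2)) := by
    have hcast : ((Dr : ℝ) : ℂ) = 3 * ((B 1 : ℝ):ℂ) ^ 2 * (C3:ℂ)
        - 4 * (((B 2 : ℝ):ℂ) - ((B 1 : ℝ):ℂ)) * (C2:ℂ) ^ 2 := by
      rw [hDrdef]; push_cast; ring
    rw [hcast]
    linear_combination ((B 1 : ℝ):ℂ)^2 * hu2 + ((B 1 : ℝ):ℂ)^2 * hv2
      + (4 * (((B 2 : ℝ):ℂ) - ((B 1 : ℝ):ℂ))) * hc1sq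
      + (2 * (((B 2 : ℝ):ℂ) - ((B 1 : ℝ):ℂ)) * ((B 1 : ℝ):ℂ)^2) * hd1sq
  -- absolute values
  have habs4 : ‖(e + 2 * c1 ^ 2) + (e' + 2 * d1 ^ 2)‖ ≤ 4 := by
    have t1 : ‖e + 2 * c1 ^ 2‖ ≤ ‖e‖ + 2 * ‖c1‖ ^ 2 := by
      calc ‖e + 2 * c1 ^ 2‖ ≤ ‖e‖ + ‖2 * c1 ^ 2‖ :=
            norm_add_le _ _
        _ = ‖e‖ + 2 * ‖c1‖ ^ 2 := by
            rw [norm_mul, norm_pow]; norm_num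
    have t2 : ‖e' + 2 * d1 ^ 2‖ ≤ ‖e'‖ + 2 * ‖d1‖ ^ 2 := by
      calc ‖e' + 2 * d1 ^ 2‖ ≤ ‖e'‖ + ‖2 * d1 ^ 2‖ :=
            norm_add_le _ _
        _ = ‖e'‖ + 2 * ‖d1‖ ^ 2 := by
            rw [norm_mul, norm_pow]; norm_num
    calc ‖(e + 2 * c1 ^ 2) + (e' + 2 * d1 ^ 2)‖
        ≤ ‖e + 2 * c1 ^ 2‖ + ‖e' + 2 * d1 ^ 2‖ :=
          norm_add_le _ _
      _ ≤ 4 := by nlinarith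
  have hDrne : Dr ≠ 0 := by rw [hDrdef, hC2def, hC3def]; exact hden
  have habskey : 4 * |Dr| * ‖a 2‖ ^ 2 ≤ B 1 ^ 3 * 4 := by
    have h := congrArg norm hkey
    rw [norm_mul, norm_mul, norm_pow, Complex.norm_real, Real.norm_eq_abs] at h
    rw [norm_mul, norm_pow, Complex.norm_real, Real.norm_eq_abs, abs_of_pos hB1] at h
    have h4 : ‖(4:ℂ)‖ = 4 := by norm_num [Complex.norm_ofNat]
    rw [h4] at h
    calc 4 * |Dr| * ‖a 2‖ ^ 2
        = B 1 ^ 3 * ‖(e + 2 * c1 ^ 2) + (e' + 2 * d1 ^ 2)‖ := h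
      _ ≤ B 1 ^ 3 * 4 := by nlinarith [pow_pos hB1 3]
  have hDrpos : 0 < |Dr| := abs_pos.mpr hDrne
  have goal1 : ‖a 2‖ ≤ B 1 * Real.sqrt (B 1) / Real.sqrt |Dr| := by
    have hsq : ‖a 2‖ ^ 2 ≤ B 1 ^ 3 / |Dr| := by
      rw [le_div_iff₀ hDrpos]
      nlinarith
    have := (Real.le_sqrt (norm_nonneg _) (by positivity)).mpr hsq
    calc ‖a 2‖ ≤ Real.sqrt (B 1 ^ 3 / |Dr|) := this
      _ = B 1 * Real.sqrt (B 1) / Real.sqrt |Dr| := by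
          rw [Real.sqrt_div (by positivity : (0:ℝ) ≤ B 1 ^ 3),
            show B 1 ^ 3 = B 1 ^ 2 * B 1 by ring,
            Real.sqrt_mul (sq_nonneg (B 1)), Real.sqrt_sq hB1.le]
  -- a 3 bound
  have hc1abs : ‖c1‖ ≤ 1 := hsc1
  have ha2small : ‖a 2‖ ≤ B 1 / (2 * C2) := by
    have h := congrArg norm hu1
    rw [norm_mul, norm_mul, norm_mul, Complex.norm_real, Real.norm_eq_abs, Complex.norm_real,
      Real.norm_eq_abs, abs_of_pos hB1, abs_of_pos hC2] at h
    have h2 : ‖(2:ℂ)‖ = 2 := by norm_num [Complex.norm_ofNat]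
    rw [h2] at h
    rw [le_div_iff₀ (by positivity)]
    have h1 : B 1 * ‖c1‖ ≤ B 1 := mul_le_of_le_one_right hB1.le hc1abs
    nlinarith [h1]
  have h5 : 12 * (C3 : ℂ) * (a 3 - (a 2) ^ 2) = ((B 1 : ℝ):ℂ) * (e - e') := by
    linear_combination hu2 - hv2 - 2 * ((B 2 : ℝ):ℂ) * hd1sq
  have hee' : ‖e - e'‖ ≤ 4 := by
    have he2 : ‖e‖ ≤ 2 := by nlinarith [norm_nonneg c1, sq_nonneg (‖c1‖)]
    have he'2 : ‖e'‖ ≤ 2 := by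
      nlinarith [norm_nonneg d1, sq_nonneg (‖d1‖)]
    have htri := norm_sub_le e e'
    linarith
  have hdiff : ‖a 3 - (a 2) ^ 2‖ ≤ B 1 / (3 * C3) := by
    have h := congrArg norm h5
    rw [norm_mul, norm_mul, norm_mul, Complex.norm_real, Real.norm_eq_abs, Complex.norm_real,
      Real.norm_eq_abs, abs_of_pos hC3, abs_of_pos hB1] at h
    have h12 : ‖(12:ℂ)‖ = 12 := by norm_num [Complex.norm_ofNat]
    rw [h12] at h
    rw [le_div_iff₀ (by positivity)]
    nlinarith [norm_nonneg (a 3 - (a 2)^2), norm_nonneg (e - e')]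
  have goal2 : ‖a 3‖ ≤ B 1 / (3 * C3) + (B 1 / (2 * C2)) ^ 2 := by
    have tri : ‖a 3‖ ≤ ‖a 3 - (a 2) ^ 2‖ + ‖a 2‖ ^ 2 := by
      calc ‖a 3‖ = ‖(a 3 - (a 2)^2) + (a 2)^2‖ := by ring_nf
        _ ≤ ‖a 3 - (a 2)^2‖ + ‖(a 2)^2‖ := norm_add_le _ _
        _ = ‖a 3 - (a 2)^2‖ + ‖a 2‖ ^ 2 := by rw [norm_pow]
    have hsq2 : ‖a 2‖ ^ 2 ≤ (B 1 / (2 * C2)) ^ 2 := by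
      apply pow_le_pow_left₀ (norm_nonneg _) ha2small
    linarith
  exact ⟨goal1, goal2⟩
end
end

section
/- (Corollary 3.4) Suppose k = 0 (so Υₙ = 1 for all n). Let −1 ≤ B < A ≤ 1 and let f(z) = z + Σ_{n≥2} aₙ zⁿ belong to the class B_Σ(0, A, B). Assume (A−B)·(2C(δ,3) − C(δ,2)²) − (B+1)·C(δ,2)² ≠ 0. Then |a₂| ≤ (A−B) / √( |(A−B)·(2C(δ,3) − C(δ,2)²) − (B+1)·C(δ,2)²| ) and |a₃| ≤ (A−B)/(2C(δ,3)) + ( (A−B)/C(δ,2) )². -/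
open Complex

noncomputable section

open Metric FormalMultilinearSeries
open scoped ENNReal NNReal Topology

lemma Cdel_pos {δ : ℝ} (hδ : 0 ≤ δ) {n : ℕ} (hn : 1 ≤ n) : 0 < Cdel δ n := by
  have h1 : (0:ℝ) < (n:ℝ) := by exact_mod_cast hn
  exact div_pos (Real.Gamma_pos_of_pos (by linarith))
    (mul_pos (Real.Gamma_pos_of_pos h1) (Real.Gamma_pos_of_pos (by linarith)))

lemma Cdel_two {δ : ℝ} (hδ : 0 ≤ δ) : Cdel δ 2 = 1 + δ := by
  have h1 : Real.Gamma ((2:ℕ) + δ) = (1 + δ) * Real.Gamma (1 + δ) := by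
    have : ((2:ℕ):ℝ) + δ = (1 + δ) + 1 := by push_cast; ring
    rw [this, Real.Gamma_add_one (by linarith)]
  have h2 : Real.Gamma ((2:ℕ):ℝ) = 1 := by
    norm_num [Real.Gamma_two]
  have h3 : Real.Gamma (δ + 1) = Real.Gamma (1 + δ) := by ring_nf
  have h4 : Real.Gamma (1 + δ) ≠ 0 := (Real.Gamma_pos_of_pos (by linarith)).ne'
  rw [Cdel, h1, h2, h3]
  field_simp

lemma Cdel_three {δ : ℝ} (hδ : 0 ≤ δ) : Cdel δ 3 = (1 + δ) * (2 + δ) / 2 := by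
  have h1 : Real.Gamma ((3:ℕ) + δ) = (2 + δ) * ((1 + δ) * Real.Gamma (1 + δ)) := by
    have e1 : ((3:ℕ):ℝ) + δ = (2 + δ) + 1 := by push_cast; ring
    have e2 : (2:ℝ) + δ = (1 + δ) + 1 := by ring
    rw [e1, Real.Gamma_add_one (by linarith), e2, Real.Gamma_add_one (by linarith)]
  have h2 : Real.Gamma ((3:ℕ):ℝ) = 2 := by
    have : ((3:ℕ):ℝ) = (2:ℝ) + 1 := by norm_num
    rw [this, Real.Gamma_add_one (by norm_num), Real.Gamma_two]; norm_num
  have h3 : Real.Gamma (δ + 1) = Real.Gamma (1 + δ) := by ring_nf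
  have h4 : Real.Gamma (1 + δ) ≠ 0 := (Real.Gamma_pos_of_pos (by linarith)).ne'
  rw [Cdel, h1, h2, h3]
  field_simp

lemma Cdel_succ {δ : ℝ} (hδ : 0 ≤ δ) {n : ℕ} (hn : 1 ≤ n) :
    Cdel δ (n + 1) = ((n:ℝ) + δ) / n * Cdel δ n := by
  have h1 : (0:ℝ) < (n:ℝ) := by exact_mod_cast hn
  have e1 : ((n+1:ℕ):ℝ) + δ = ((n:ℝ) + δ) + 1 := by push_cast; ring
  have e2 : ((n+1:ℕ):ℝ) = (n:ℝ) + 1 := by push_cast; ring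
  have h2 : Real.Gamma (((n+1:ℕ):ℝ) + δ) = ((n:ℝ) + δ) * Real.Gamma ((n:ℝ) + δ) := by
    rw [e1, Real.Gamma_add_one (by linarith)]
  have h3 : Real.Gamma ((n+1:ℕ):ℝ) = (n:ℝ) * Real.Gamma (n:ℝ) := by
    rw [e2, Real.Gamma_add_one h1.ne']
  have hg1 : Real.Gamma ((n:ℝ)) ≠ 0 := (Real.Gamma_pos_of_pos h1).ne'
  have hg2 : Real.Gamma (δ + 1) ≠ 0 := (Real.Gamma_pos_of_pos (by linarith)).ne'
  rw [Cdel, Cdel, h2, h3]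
  field_simp

lemma Cdel_le {δ : ℝ} (hδ : 0 ≤ δ) : ∀ n : ℕ, 1 ≤ n → Cdel δ n ≤ (1 + δ) ^ n := by
  intro n hn
  induction n with
  | zero => omega
  | succ m ih =>
    rcases Nat.eq_or_lt_of_le hn with h | h
    · have : m = 0 := by omega
      subst this
      have : Cdel δ 1 = 1 := by
        rw [Cdel]
        have : ((1:ℕ):ℝ) = 1 := by norm_num
        rw [this, Real.Gamma_one]
        have h3 : Real.Gamma (δ + 1) = Real.Gamma (1 + δ) := by ring_nf
        have h4 : Real.Gamma (1 + δ) ≠ 0 := (Real.Gamma_pos_of_pos (by linarith)).ne'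
        rw [h3]; field_simp
      rw [this]
      have e : (1+δ)^(0+1) = 1+δ := by ring
      rw [e]; linarith
    · have hm : 1 ≤ m := by omega
      have hmr : (0:ℝ) < (m:ℝ) := by exact_mod_cast hm
      have hrec := Cdel_succ hδ hm
      have hratio : ((m:ℝ) + δ) / m ≤ 1 + δ := by
        have hm1 : (1:ℝ) ≤ (m:ℝ) := by exact_mod_cast hm
        rw [div_le_iff₀ hmr]; nlinarith
      have hpos := (Cdel_pos hδ hm).le
      calc Cdel δ (m+1) = ((m:ℝ) + δ)/m * Cdel δ m := hrec
        _ ≤ (1 + δ) * (1 + δ)^m := by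
            apply mul_le_mul hratio (ih hm) hpos (by linarith)
        _ = (1 + δ)^(m+1) := by ring


lemma mobius_den_ne {s ζ : ℂ} (hs : ‖s‖ < 1) (hζ : ‖ζ‖ ≤ 1) :
    1 - (starRingEnd ℂ) s * ζ ≠ 0 := by
  intro h
  have h1 : (starRingEnd ℂ) s * ζ = 1 := by linear_combination -h
  have : ‖(starRingEnd ℂ) s * ζ‖ < 1 := by
    rw [norm_mul, RCLike.norm_conj]
    calc ‖s‖ * ‖ζ‖ ≤ ‖s‖ * 1 := by
          apply mul_le_mul_of_nonneg_left hζ (norm_nonneg _)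
      _ < 1 := by simpa using hs
  rw [h1] at this; simp at this

lemma normSq_mobius {s ζ : ℂ} :
    Complex.normSq (1 - (starRingEnd ℂ) s * ζ) - Complex.normSq (ζ - s)
      = (1 - Complex.normSq s) * (1 - Complex.normSq ζ) := by
  simp only [Complex.normSq_apply, Complex.sub_re, Complex.sub_im, Complex.mul_re,
    Complex.mul_im, Complex.conj_re, Complex.conj_im, Complex.one_re, Complex.one_im]
  ring

lemma mobius_lt {s ζ : ℂ} (hs : ‖s‖ < 1) (hζ : ‖ζ‖ < 1) :
    ‖(ζ - s) / (1 - (starRingEnd ℂ) s * ζ)‖ < 1 := by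
  have hden := mobius_den_ne hs hζ.le
  rw [norm_div, div_lt_one (norm_pos_iff.mpr hden)]
  have h1 : Complex.normSq s < 1 := by
    rw [Complex.normSq_eq_norm_sq]
    nlinarith [norm_nonneg s]
  have h2 : Complex.normSq ζ < 1 := by
    rw [Complex.normSq_eq_norm_sq]
    nlinarith [norm_nonneg ζ]
  have key := normSq_mobius (s := s) (ζ := ζ)
  have e1 : ‖ζ - s‖ ^ 2 = Complex.normSq (ζ - s) := by
    rw [Complex.sq_norm]
  have e2 : ‖1 - (starRingEnd ℂ) s * ζ‖ ^ 2 = Complex.normSq (1 - (starRingEnd ℂ) s * ζ) := by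
    rw [Complex.sq_norm]
  nlinarith [norm_nonneg (ζ - s), norm_nonneg (1 - (starRingEnd ℂ) s * ζ)]

lemma schwarz_two {u : ℂ → ℂ} (hd : DifferentiableOn ℂ u (ball 0 1))
    (h0 : u 0 = 0) (hb : ∀ z ∈ ball (0:ℂ) 1, ‖u z‖ < 1) :
    ‖dslope u 0 0‖ ≤ 1 ∧ ‖deriv (dslope u 0) 0‖ ≤ 1 - ‖dslope u 0 0‖ ^ 2 := by
  have h01 : (0:ℂ) ∈ ball (0:ℂ) 1 := mem_ball_self one_pos
  have hmaps : Set.MapsTo u (ball 0 1) (ball (u 0) 1) := by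
    rw [h0]; intro z hz; exact mem_ball_zero_iff.2 (hb z hz)
  set v := dslope u 0 with hv
  have hv_le : ∀ z ∈ ball (0:ℂ) 1, ‖v z‖ ≤ 1 := fun z hz => by
    simpa using Complex.norm_dslope_le_div_of_mapsTo_ball hd (hmaps.mono_right ball_subset_closedBall) hz
  have hvd : DifferentiableOn ℂ v (ball 0 1) :=
    (differentiableOn_dslope (isOpen_ball.mem_nhds h01)).mpr hd
  refine ⟨hv_le 0 h01, ?_⟩
  by_cases hex : ∃ z₀ ∈ ball (0:ℂ) 1, ‖v z₀‖ = 1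
  · obtain ⟨z₀, hz₀, hz₀n⟩ := hex
    have hmax : IsMaxOn (norm ∘ v) (ball (0:ℂ) 1) z₀ := by
      apply isMaxOn_iff.mpr
      intro z hz
      simp only [Function.comp_apply, hz₀n]
      exact hv_le z hz
    have heq := Complex.eqOn_of_isPreconnected_of_isMaxOn_norm
      (convex_ball (0:ℂ) 1).isPreconnected isOpen_ball hvd hz₀ hmax
    have hv00 : v 0 = v z₀ := heq h01
    have hder : deriv v 0 = 0 := by
      have hev : v =ᶠ[nhds (0:ℂ)] (fun _ => v z₀) :=
        Filter.eventuallyEq_of_mem (isOpen_ball.mem_nhds h01) heq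
      rw [hev.deriv_eq, deriv_const]
    rw [hder, norm_zero, hv00, hz₀n]
    norm_num
  · push_neg at hex
    have hvlt : ∀ z ∈ ball (0:ℂ) 1, ‖v z‖ < 1 := fun z hz =>
      lt_of_le_of_ne (hv_le z hz) (hex z hz)
    set s := v 0 with hs_def
    have hs : ‖s‖ < 1 := hvlt 0 h01
    set w : ℂ → ℂ := fun z => (v z - s) / (1 - (starRingEnd ℂ) s * v z) with hw_def
    have hden : ∀ z ∈ ball (0:ℂ) 1, 1 - (starRingEnd ℂ) s * v z ≠ 0 := fun z hz =>
      mobius_den_ne hs (hv_le z hz)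
    have hwd : DifferentiableOn ℂ w (ball 0 1) := by
      apply DifferentiableOn.div (hvd.sub_const s)
      · exact (differentiableOn_const 1).sub ((differentiableOn_const _).mul hvd)
      · exact hden
    have hw0 : w 0 = 0 := by simp [hw_def, ← hs_def]
    have hwm : Set.MapsTo w (ball (0:ℂ) 1) (ball (w 0) 1) := by
      rw [hw0]; intro z hz
      exact mem_ball_zero_iff.2 (mobius_lt hs (hvlt z hz))
    have hw1 : ‖deriv w 0‖ ≤ 1 := by
      simpa using Complex.norm_deriv_le_div_of_mapsTo_ball hwd (hwm.mono_right ball_subset_closedBall) one_pos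
    have hv0 : HasDerivAt v (deriv v 0) 0 :=
      (hvd.differentiableAt (isOpen_ball.mem_nhds h01)).hasDerivAt
    have hnum : HasDerivAt (fun z => v z - s) (deriv v 0) 0 := hv0.sub_const s
    have hden' : HasDerivAt (fun z => 1 - (starRingEnd ℂ) s * v z)
        (-((starRingEnd ℂ) s * deriv v 0)) 0 := by
      simpa using ((hv0.const_mul ((starRingEnd ℂ) s)).const_sub 1)
    have hden0 : 1 - (starRingEnd ℂ) s * v 0 ≠ 0 := hden 0 h01
    have hw' := hnum.div hden' hden0
    have hspos : (0:ℝ) < 1 - ‖s‖^2 := by nlinarith [norm_nonneg s]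
    have hwderiv : deriv w 0 = deriv v 0 / (1 - (starRingEnd ℂ) s * v 0) := by
      rw [show deriv w 0 = _ from hw'.deriv, ← hs_def, sub_self, zero_mul, sub_zero]
      have ht : 1 - (starRingEnd ℂ) s * s ≠ 0 := by rw [hs_def]; exact hden0
      field_simp
    have hts : (1 : ℂ) - (starRingEnd ℂ) s * v 0 = ((1 - ‖s‖^2 : ℝ) : ℂ) := by
      rw [← hs_def]
      have e : (starRingEnd ℂ) s * s = (Complex.normSq s : ℂ) := by
        rw [mul_comm, Complex.mul_conj]
      rw [e, Complex.normSq_eq_norm_sq]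
      push_cast; ring
    have hfin : ‖deriv v 0‖ / (1 - ‖s‖^2) ≤ 1 := by
      have := hw1
      rw [hwderiv, hts, norm_div, Complex.norm_real, Real.norm_eq_abs,
        abs_of_pos hspos] at this
      exact this
    rw [div_le_one hspos] at hfin
    exact hfin

lemma series_exists (e : ℕ → ℂ) (C r : ℝ) (hr : 0 < r) (hb : ∀ n, ‖e n‖ * r ^ n ≤ C) :
    ∃ S : ℂ → ℂ,
      HasFPowerSeriesOnBall S (FormalMultilinearSeries.ofScalars ℂ e) 0 (ENNReal.ofReal r) ∧
      ∀ z : ℂ, ‖z‖ < r → HasSum (fun n => e n * z ^ n) (S z) := by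
  set q := FormalMultilinearSeries.ofScalars ℂ e with hq
  have hrad : ENNReal.ofReal r ≤ q.radius := by
    have : (r.toNNReal : ℝ≥0∞) ≤ q.radius := by
      apply q.le_radius_of_bound C
      intro n
      have : ‖q n‖ = ‖e n‖ := ofScalars_norm ℂ e n
      rw [this, Real.coe_toNNReal r hr.le]
      exact hb n
    rwa [ENNReal.ofReal] 
  have hpos : (0 : ℝ≥0∞) < ENNReal.ofReal r := ENNReal.ofReal_pos.mpr hr
  have hball : HasFPowerSeriesOnBall q.sum q 0 (ENNReal.ofReal r) :=
    (q.hasFPowerSeriesOnBall (lt_of_lt_of_le hpos hrad)).mono hpos hrad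
  refine ⟨q.sum, hball, fun z hz => ?_⟩
  have hzmem : z ∈ Metric.eball (0:ℂ) (ENNReal.ofReal r) := by
    rw [Metric.mem_eball, edist_zero_right, ← ofReal_norm]
    exact ENNReal.ofReal_lt_ofReal_iff_of_nonneg (norm_nonneg z) |>.mpr hz
  have := hball.hasSum hzmem
  simp only [zero_add] at this
  convert this using 2 with n
  · rfl
  rw [hq, ofScalars_apply_eq, smul_eq_mul]

lemma analyticAt_deriv {f : ℂ → ℂ} {x : ℂ} (h : AnalyticAt ℂ f x) : AnalyticAt ℂ (deriv f) x :=
  (AnalyticOnNhd.deriv (fun y (hy : y ∈ {y | AnalyticAt ℂ f y}) => hy)) x h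

lemma ofScalars_coeff (e : ℕ → ℂ) (n : ℕ) :
    (FormalMultilinearSeries.ofScalars ℂ e).coeff n = e n := by
  have h := FormalMultilinearSeries.ofScalars_apply_eq (c := e) (1:ℂ) n
  simp only [one_pow, smul_eq_mul, mul_one] at h
  exact h

lemma key (lam al be δ A B' : ℝ) (hδ : 0 ≤ δ)
    (hB'1 : -1 ≤ B') (hBA : B' < A) (hA1 : A ≤ 1)
    (a : ℕ → ℂ) (ha0 : a 0 = 0) (ha1 : a 1 = 1)
    (hsum : Summable fun n => a n * (2⁻¹ : ℂ) ^ n)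
    (hsub : Subord (bazFun 0 (Dop lam al be δ 0 a))
      (fun z : ℂ => (1 + (A : ℂ) * z) / (1 + (B' : ℂ) * z))) :
    ∃ c₁ c₂ : ℂ, ‖c₁‖ ≤ 1 ∧ ‖c₂‖ ≤ 1 - ‖c₁‖ ^ 2 ∧
      ((Cdel δ 2 : ℝ) : ℂ) * a 2 = ((A - B' : ℝ) : ℂ) * c₁ ∧
      2 * ((Cdel δ 3 : ℝ) : ℂ) * a 3 - (((Cdel δ 2 : ℝ) : ℂ) * a 2) ^ 2
        = ((A - B' : ℝ) : ℂ) * c₂ - ((B' : ℝ) : ℂ) * ((A - B' : ℝ) : ℂ) * c₁ ^ 2 := by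
  -- bound on coefficients
  have hhalf : ‖(2⁻¹ : ℂ)‖ = (2⁻¹ : ℝ) := by
    rw [norm_inv]; norm_num
  obtain ⟨M, hM⟩ : ∃ M : ℝ, ∀ n, ‖a n‖ * (2⁻¹:ℝ) ^ n ≤ M := by
    have ht : Filter.Tendsto (fun n => ‖a n * (2⁻¹:ℂ) ^ n‖) Filter.atTop (nhds 0) := by
      simpa using hsum.tendsto_atTop_zero.norm
    obtain ⟨M, hM⟩ := ht.bddAbove_range
    refine ⟨M, fun n => ?_⟩
    have h := hM (Set.mem_range_self n)
    rwa [norm_mul, norm_pow, hhalf] at h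
  have hMnn : 0 ≤ M := le_trans (by positivity) (hM 0)
  have han : ∀ n, ‖a n‖ ≤ M * 2 ^ n := by
    intro n
    have h1 : ‖a n‖ = (‖a n‖ * (2⁻¹:ℝ) ^ n) * 2 ^ n := by
      rw [mul_assoc, ← mul_pow]; norm_num
    rw [h1]
    exact mul_le_mul_of_nonneg_right (hM n) (by positivity)
  -- the coefficient sequence of D f
  set e : ℕ → ℂ := fun n => if n = 0 then 0 else if n = 1 then 1
    else ((Cdel δ n : ℝ) : ℂ) * a n with he
  have hδ1 : (0:ℝ) < 1 + δ := by linarith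
  set r0 : ℝ := (4 * (1 + δ))⁻¹ with hr0_def
  have hr0 : 0 < r0 := by positivity
  have hr0le : r0 ≤ 4⁻¹ := by
    rw [hr0_def]
    apply inv_anti₀ (by norm_num)
    nlinarith
  have hCb : ∀ n, ‖e n‖ * r0 ^ n ≤ max M 1 := by
    intro n
    match n with
    | 0 => simp [he]
    | 1 =>
      have h1 : e 1 = 1 := by simp [he]
      rw [h1, norm_one, one_mul, pow_one]
      exact le_trans (le_trans hr0le (by norm_num)) (le_max_right M 1)
    | (m+2) =>
      have h2 : ¬ (m+2 = 0) := by omega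
      have h3 : ¬ (m+2 = 1) := by omega
      have hCpos := (Cdel_pos hδ (n := m+2) (by omega)).le
      have hnorm : ‖e (m+2)‖ = Cdel δ (m+2) * ‖a (m+2)‖ := by
        rw [he]
        simp only [if_neg h2, if_neg h3, norm_mul, Complex.norm_real, Real.norm_eq_abs,
          _root_.abs_of_nonneg hCpos]
      rw [hnorm]
      have hkey : (1 + δ) * (2 * r0) = 2⁻¹ := by
        rw [hr0_def]; field_simp; ring
      calc Cdel δ (m+2) * ‖a (m+2)‖ * r0 ^ (m+2)
          ≤ (1 + δ) ^ (m+2) * (M * 2 ^ (m+2)) * r0 ^ (m+2) := by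
            apply mul_le_mul_of_nonneg_right _ (by positivity)
            apply mul_le_mul (Cdel_le hδ _ (by omega)) (han _) (norm_nonneg _) (by positivity)
        _ = M * ((1 + δ) * (2 * r0)) ^ (m+2) := by
            rw [mul_pow (1 + δ) (2 * r0), mul_pow 2 r0]; ring
        _ = M * (2⁻¹:ℝ) ^ (m+2) := by rw [hkey]
        _ ≤ M * 1 := by
            apply mul_le_mul_of_nonneg_left _ hMnn
            apply pow_le_one₀ (by norm_num) (by norm_num)
        _ ≤ max M 1 := by simpa using le_max_left M 1
  obtain ⟨S, hS, hSsum⟩ := series_exists e (max M 1) r0 hr0 hCb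
  -- Dop agrees with S near 0
  have hDeq : ∀ z : ℂ, ‖z‖ < r0 → Dop lam al be δ 0 a z = S z := by
    intro z hz
    have h1 : HasSum (fun n => e n * z ^ n) (S z) := hSsum z hz
    have h2 : HasSum (fun n : ℕ => if n = 1 then z else 0) z := hasSum_ite_eq 1 z
    have h3 := h1.sub h2
    have h4 : (fun n : ℕ => e n * z ^ n - if n = 1 then z else 0)
        = fun n : ℕ => if 2 ≤ n then ((Ups lam al be 0 n : ℝ) : ℂ)
            * ((Cdel δ n : ℝ) : ℂ) * a n * z ^ n else 0 := by
      funext n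
      match n with
      | 0 => simp [he, ha0]
      | 1 => simp [he]
      | (m+2) =>
        have h5 : (2:ℕ) ≤ m + 2 := by omega
        have h6 : ¬ (m+2 = 0) := by omega
        have h7 : ¬ (m+2 = 1) := by omega
        have h8 : Ups lam al be 0 (m+2) = 1 := by rw [Ups, pow_zero]
        simp only [he, if_neg h6, if_neg h7, if_pos h5, h8, Complex.ofReal_one, one_mul,
          sub_zero]
    rw [h4] at h3
    rw [Dop, h3.tsum_eq]
    ring
  -- dslope functions
  set q := FormalMultilinearSeries.ofScalars ℂ e with hqdef
  have hq : HasFPowerSeriesAt S q 0 := hS.hasFPowerSeriesAt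
  set h1f := dslope S 0 with hh1
  set h2f := dslope h1f 0 with hh2
  have hps_h : HasFPowerSeriesAt h1f q.fslope 0 := hq.has_fpower_series_dslope_fslope
  have hps_h2 : HasFPowerSeriesAt h2f q.fslope.fslope 0 := hps_h.has_fpower_series_dslope_fslope
  have hS0 : S 0 = 0 := by
    have h1 : HasSum (fun n => e n * (0:ℂ) ^ n) (S 0) := hSsum 0 (by simpa using hr0)
    have h2 : (fun n => e n * (0:ℂ) ^ n) = fun _ => (0:ℂ) := by
      funext n
      match n with
      | 0 => simp [he]
      | (m+1) => simp
    rw [h2] at h1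
    exact h1.unique hasSum_zero
  have he1 : e 1 = 1 := by simp [he]
  have he2 : e 2 = ((Cdel δ 2 : ℝ) : ℂ) * a 2 := by simp [he]
  have he3 : e 3 = ((Cdel δ 3 : ℝ) : ℂ) * a 3 := by simp [he]
  have hderivS0 : deriv S 0 = 1 := by
    rw [hq.deriv]
    exact (ofScalars_coeff e 1).trans he1
  have h1f0 : h1f 0 = 1 := by rw [hh1, dslope_same, hderivS0]
  have hD2 : deriv h1f 0 = e 2 := by
    rw [hps_h.deriv]
    exact (coeff_fslope (p := q) (n := 1)).trans (ofScalars_coeff e 2)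
  have h2f0 : h2f 0 = e 2 := by rw [hh2, dslope_same, hD2]
  have hD3 : deriv h2f 0 = e 3 := by
    rw [hps_h2.deriv]
    exact ((coeff_fslope (p := q.fslope) (n := 1)).trans
      (coeff_fslope (p := q) (n := 2))).trans (ofScalars_coeff e 3)
  have han1 : AnalyticAt ℂ h1f 0 := hps_h.analyticAt
  have han2 : AnalyticAt ℂ h2f 0 := hps_h2.analyticAt
  have hand1 : AnalyticAt ℂ (deriv h1f) 0 := analyticAt_deriv han1
  have hand2 : AnalyticAt ℂ (deriv h2f) 0 := analyticAt_deriv han2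
  have hSid : ∀ w : ℂ, S w = w * h1f w := by
    intro w
    have h := sub_smul_dslope S 0 w
    rw [sub_zero, smul_eq_mul, hS0, sub_zero] at h
    rw [← h, hh1]
  have h1id : ∀ w : ℂ, h1f w = 1 + w * h2f w := by
    intro w
    have h := sub_smul_dslope h1f 0 w
    rw [sub_zero, smul_eq_mul, h1f0] at h
    rw [← hh2] at h
    linear_combination -h
  -- the subordination data
  obtain ⟨u, hu_an, hu0, hu_lt, hu_eq⟩ := hsub
  have hu_at : AnalyticAt ℂ u 0 := hu_an 0 (mem_ball_self one_pos)
  obtain ⟨pu, hpu⟩ := hu_at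
  set v := dslope u 0 with hvdef
  have hps_v : HasFPowerSeriesAt v pu.fslope 0 := hpu.has_fpower_series_dslope_fslope
  have han_v : AnalyticAt ℂ v 0 := hps_v.analyticAt
  set c₁ := v 0 with hc1
  set c₂ := deriv v 0 with hc2
  have hvd : deriv u 0 = c₁ := by rw [hc1, hvdef, dslope_same]
  have huid : ∀ w : ℂ, u w = w * v w := by
    intro w
    have h := sub_smul_dslope u 0 w
    rw [sub_zero, smul_eq_mul, hu0, sub_zero] at h
    rw [← h, hvdef]
  -- Schwarz bounds
  have hb : ∀ z ∈ ball (0:ℂ) 1, ‖u z‖ < 1 := by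
    intro z hz
    exact hu_lt z hz
  obtain ⟨hbc1, hbc2⟩ := schwarz_two (hu_an.differentiableOn) hu0 hb
  -- norm of B'
  have hB'abs : ‖((B':ℝ):ℂ)‖ ≤ 1 := by
    rw [Complex.norm_real, Real.norm_eq_abs]
    exact abs_le.mpr ⟨hB'1, by linarith⟩
  have hden2 : ∀ z ∈ ball (0:ℂ) 1, 1 + ((B':ℝ):ℂ) * u z ≠ 0 := by
    intro z hz hcon
    have h1 : ‖((B':ℝ):ℂ) * u z‖ < 1 := by
      rw [norm_mul]
      calc ‖((B':ℝ):ℂ)‖ * ‖u z‖ ≤ 1 * ‖u z‖ :=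
            mul_le_mul_of_nonneg_right hB'abs (norm_nonneg _)
        _ = ‖u z‖ := one_mul _
        _ < 1 := hb z hz
    have h2 : ((B':ℝ):ℂ) * u z = -1 := by linear_combination hcon
    rw [h2] at h1
    simp at h1
  -- G1 and G2
  set G1 : ℂ → ℂ := fun z => deriv h1f z / h1f z with hG1
  set G2 : ℂ → ℂ := fun z => (((A:ℝ):ℂ) - ((B':ℝ):ℂ)) * v z / (1 + ((B':ℝ):ℂ) * u z) with hG2
  -- eventual equality on the punctured neighborhood
  have ev1 : ∀ᶠ z in 𝓝 (0:ℂ), ‖z‖ < r0 := by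
    filter_upwards [Metric.ball_mem_nhds (0:ℂ) hr0] with z hz
    exact mem_ball_zero_iff.mp hz
  have ev2 : ∀ᶠ z in 𝓝 (0:ℂ), z ∈ ball (0:ℂ) 1 := Metric.ball_mem_nhds (0:ℂ) one_pos
  have ev3 : ∀ᶠ z in 𝓝 (0:ℂ), h1f z ≠ 0 :=
    hps_h.continuousAt.eventually_ne (by rw [h1f0]; exact one_ne_zero)
  have ev4 : ∀ᶠ z in 𝓝 (0:ℂ), AnalyticAt ℂ h1f z := han1.eventually_analyticAt
  have hpunct : ∀ᶠ z in 𝓝[≠] (0:ℂ), G1 z = G2 z := by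
    filter_upwards [(ev1.and (ev2.and (ev3.and ev4))).filter_mono nhdsWithin_le_nhds,
      self_mem_nhdsWithin] with z hz hz0'
    obtain ⟨hz_r0, hz_1, hz_h1ne, hz_an⟩ := hz
    have hz0 : z ≠ 0 := hz0'
    have hFz : Dop lam al be δ 0 a z = z * h1f z := by rw [hDeq z hz_r0, hSid z]
    have hFd : deriv (Dop lam al be δ 0 a) z = h1f z + z * deriv h1f z := by
      have hevz : ∀ᶠ w in 𝓝 z, Dop lam al be δ 0 a w = S w := by
        filter_upwards [isOpen_ball.mem_nhds (mem_ball_zero_iff.mpr hz_r0)] with w hw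
        exact hDeq w (mem_ball_zero_iff.mp hw)
      rw [Filter.EventuallyEq.deriv_eq hevz]
      have hSfun : S = fun w => w * h1f w := funext hSid
      rw [hSfun]
      have hder : HasDerivAt (fun w : ℂ => w * h1f w) (1 * h1f z + z * deriv h1f z) z :=
        (hasDerivAt_id z).mul hz_an.differentiableAt.hasDerivAt
      rw [hder.deriv]; ring
    have heq := hu_eq z hz_1
    rw [bazFun, if_neg hz0, hFz, hFd] at heq
    simp only [Complex.ofReal_zero, cpow_zero, mul_one] at heq
    rw [huid z] at heq
    have hdenz : 1 + ((B':ℝ):ℂ) * (z * v z) ≠ 0 := by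
      have := hden2 z hz_1
      rwa [huid z] at this
    have heq' := (div_eq_div_iff (mul_ne_zero hz0 hz_h1ne)
      (by exact hdenz)).mp heq
    show deriv h1f z / h1f z = (((A:ℝ):ℂ) - ((B':ℝ):ℂ)) * v z / (1 + ((B':ℝ):ℂ) * u z)
    rw [huid z, div_eq_div_iff hz_h1ne hdenz]
    refine mul_left_cancel₀ (pow_ne_zero 2 hz0) ?_
    linear_combination heq'
  -- continuity
  have hcont1 : ContinuousAt G1 0 := by
    apply ContinuousAt.div hand1.continuousAt han1.continuousAt
    rw [h1f0]; exact one_ne_zero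
  have hden20 : (1:ℂ) + ((B':ℝ):ℂ) * u 0 ≠ 0 := by
    rw [hu0, mul_zero, add_zero]; exact one_ne_zero
  have hcont2 : ContinuousAt G2 0 := by
    apply ContinuousAt.div (continuousAt_const.mul han_v.continuousAt)
      (continuousAt_const.add (continuousAt_const.mul hpu.continuousAt)) hden20
  have heq0 : G1 0 = G2 0 := by
    have t1 : Filter.Tendsto G1 (𝓝[≠] (0:ℂ)) (𝓝 (G1 0)) := hcont1.continuousWithinAt
    have t2 : Filter.Tendsto G1 (𝓝[≠] (0:ℂ)) (𝓝 (G2 0)) :=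
      hcont2.continuousWithinAt.congr'
        (Filter.EventuallyEq.symm (hpunct : G1 =ᶠ[𝓝[≠] (0:ℂ)] G2))
    exact tendsto_nhds_unique t1 t2
  have hev_nhds : G1 =ᶠ[𝓝 (0:ℂ)] G2 := by
    rw [Filter.EventuallyEq, ← nhdsNE_sup_pure (0:ℂ),
      Filter.eventually_sup]
    exact ⟨hpunct, by simpa using heq0⟩

  -- evaluate at 0
  have heval0 : e 2 = (((A:ℝ):ℂ) - ((B':ℝ):ℂ)) * c₁ := by
    have h1 : G1 0 = e 2 := by rw [hG1]; simp only; rw [hD2, h1f0, div_one]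
    have h2 : G2 0 = (((A:ℝ):ℂ) - ((B':ℝ):ℂ)) * c₁ := by
      rw [hG2]; simp only; rw [hu0, mul_zero, add_zero, div_one, ← hc1]
    rw [← h1, heq0, h2]
  -- derivative of G1 at 0
  have hd_num : HasDerivAt (deriv h1f) (deriv (deriv h1f) 0) 0 :=
    hand1.differentiableAt.hasDerivAt
  have hd_den : HasDerivAt h1f (e 2) 0 := by
    have := han1.differentiableAt.hasDerivAt
    rwa [hD2] at this
  have hdG1 := hd_num.div hd_den (by rw [h1f0]; exact one_ne_zero)
  have hG1d : deriv G1 0 = deriv (deriv h1f) 0 - e 2 ^ 2 := by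
    rw [hG1, show deriv (fun z => deriv h1f z / h1f z) 0 = _ from hdG1.deriv, h1f0, hD2]
    field_simp
  -- second derivative: deriv (deriv h1f) 0 = 2 * e 3
  have hder_h1 : ∀ᶠ w in 𝓝 (0:ℂ), deriv h1f w = h2f w + w * deriv h2f w := by
    filter_upwards [han2.eventually_analyticAt] with w hw
    have hfun : h1f = fun w => 1 + w * h2f w := funext h1id
    rw [hfun]
    have h1 : HasDerivAt (fun y : ℂ => 1 + y * h2f y) (1 * h2f w + w * deriv h2f w) w :=
      ((hasDerivAt_id w).mul hw.differentiableAt.hasDerivAt).const_add 1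
    rw [h1.deriv]
    ring
  have hDD : deriv (deriv h1f) 0 = 2 * e 3 := by
    rw [Filter.EventuallyEq.deriv_eq hder_h1]
    have h1 : HasDerivAt (fun w : ℂ => h2f w + w * deriv h2f w)
        (deriv h2f 0 + (1 * deriv h2f 0 + 0 * deriv (deriv h2f) 0)) 0 :=
      (han2.differentiableAt.hasDerivAt).add
        ((hasDerivAt_id (0:ℂ)).mul hand2.differentiableAt.hasDerivAt)
    rw [h1.deriv, hD3]
    ring
  -- derivative of G2 at 0
  have hu_diff : DifferentiableAt ℂ u 0 := hpu.analyticAt.differentiableAt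
  have hd_numG2 : HasDerivAt (fun z => (((A:ℝ):ℂ) - ((B':ℝ):ℂ)) * v z)
      ((((A:ℝ):ℂ) - ((B':ℝ):ℂ)) * c₂) 0 :=
    (han_v.differentiableAt.hasDerivAt).const_mul _
  have hd_denG2 : HasDerivAt (fun z => 1 + ((B':ℝ):ℂ) * u z) (((B':ℝ):ℂ) * c₁) 0 := by
    have h1 := (hu_diff.hasDerivAt).const_mul ((B':ℝ):ℂ)
    rw [hvd] at h1
    exact h1.const_add 1
  have hdG2 := hd_numG2.div hd_denG2 hden20
  have hG2d : deriv G2 0 = (((A:ℝ):ℂ) - ((B':ℝ):ℂ)) * c₂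
      - ((B':ℝ):ℂ) * ((((A:ℝ):ℂ) - ((B':ℝ):ℂ))) * c₁ ^ 2 := by
    rw [hG2, show deriv (fun z => (((A:ℝ):ℂ) - ((B':ℝ):ℂ)) * v z / (1 + ((B':ℝ):ℂ) * u z)) 0 = _ from hdG2.deriv, hu0, mul_zero, add_zero, ← hc1]
    field_simp
  -- conclude
  refine ⟨c₁, c₂, hbc1, hbc2, ?_, ?_⟩
  · rw [← he2]
    have : ((A - B' : ℝ) : ℂ) = ((A:ℝ):ℂ) - ((B':ℝ):ℂ) := by push_cast; ring
    rw [this]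
    exact heval0
  · have hde := hev_nhds.deriv_eq
    rw [hG1d, hDD, hG2d] at hde
    have hcast : ((A - B' : ℝ) : ℂ) = ((A:ℝ):ℂ) - ((B':ℝ):ℂ) := by push_cast; ring
    rw [hcast]
    linear_combination hde - 2 * he3 + (e 2 + ((Cdel δ 2:ℝ):ℂ) * a 2) * he2

set_option maxHeartbeats 1000000 in
theorem cor_3_4 (α β lam δ : ℝ)
    (hα0 : 0 < α) (hα1 : α ≤ 1) (hβ0 : 0 < β) (hβ1 : β ≤ 1)
    (hlam : 0 ≤ lam) (hδ : 0 ≤ δ)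
    (A B' : ℝ) (hB'1 : -1 ≤ B') (hBA : B' < A) (hA1 : A ≤ 1)
    (f g : ℂ → ℂ) (a b : ℕ → ℂ)
    (hmem : MemB lam α β δ 0 0 (fun z : ℂ => (1 + (A : ℂ) * z) / (1 + (B' : ℂ) * z)) f g a b)
    (hden : (A - B') * (2 * Cdel δ 3 - Cdel δ 2 ^ 2) - (B' + 1) * Cdel δ 2 ^ 2 ≠ 0) :
    ‖a 2‖ ≤ (A - B') /
      Real.sqrt |(A - B') * (2 * Cdel δ 3 - Cdel δ 2 ^ 2) - (B' + 1) * Cdel δ 2 ^ 2| ∧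
    ‖a 3‖ ≤ (A - B') / (2 * Cdel δ 3) + ((A - B') / Cdel δ 2) ^ 2 := by
  obtain ⟨hfA, hfInj, hgA, hgInj, hinv, hb2, hb3, hDa, hDb, hsubf, hsubg⟩ := hmem
  obtain ⟨hf_an, ha0, ha1, hfs⟩ := hfA
  obtain ⟨hg_an, hb0, hb1, hgs⟩ := hgA
  have hhalfn : ‖(2⁻¹ : ℂ)‖ = (2⁻¹:ℝ) := by rw [norm_inv]; norm_num
  have hhalfmem : (2⁻¹ : ℂ) ∈ unitDisk := by
    show (2⁻¹:ℂ) ∈ Metric.ball (0:ℂ) 1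
    rw [mem_ball_zero_iff, hhalfn]; norm_num
  have hsum_a : Summable fun n => a n * (2⁻¹:ℂ)^n := (hfs _ hhalfmem).summable
  have hsum_b : Summable fun n => b n * (2⁻¹:ℂ)^n := (hgs _ hhalfmem).summable
  obtain ⟨c₁, c₂, hc1, hc2, hE1, hE2⟩ :=
    key lam α β δ A B' hδ hB'1 hBA hA1 a ha0 ha1 hsum_a hsubf
  obtain ⟨d₁, d₂, hd1, hd2, hE3, hE4⟩ :=
    key lam α β δ A B' hδ hB'1 hBA hA1 b hb0 hb1 hsum_b hsubg
  rw [hb2] at hE3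
  rw [hb3, hb2] at hE4
  push_cast at hE1 hE2 hE3 hE4
  -- real abbreviations
  set C2 : ℝ := Cdel δ 2 with hC2def
  set C3 : ℝ := Cdel δ 3 with hC3def
  have hC2 : C2 = 1 + δ := Cdel_two hδ
  have hC3 : C3 = (1 + δ) * (2 + δ) / 2 := Cdel_three hδ
  clear_value C2 C3
  have hC2pos : 0 < C2 := by rw [hC2]; linarith
  have hC3pos : 0 < C3 := by rw [hC3]; nlinarith
  have hgap : 2 * C3 - C2 ^ 2 = 1 + δ := by rw [hC2, hC3]; ring
  have hb1pos : 0 < A - B' := by linarith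
  have hB1 : 0 ≤ 1 + B' := by linarith
  have hb1c : ((A:ℂ) - (B':ℂ)) ≠ 0 := by
    intro hcon
    have : ((A - B' : ℝ):ℂ) = 0 := by push_cast; linear_combination hcon
    rw [Complex.ofReal_eq_zero] at this
    linarith
  -- d₁ = -c₁
  have hd1c : d₁ = -c₁ := by
    have h1 : ((A:ℂ) - (B':ℂ)) * d₁ = ((A:ℂ) - (B':ℂ)) * (-c₁) := by
      linear_combination -hE3 - hE1
    exact mul_left_cancel₀ hb1c h1
  -- ### bound for a 3
  have key3 : (4 * (C3:ℂ)) * (a 3 - a 2 ^ 2) = ((A:ℂ) - (B':ℂ)) * (c₂ - d₂) := by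
    linear_combination hE2 - hE4 + ((B':ℂ) * ((A:ℂ) - (B':ℂ)) * (d₁ - c₁)) * hd1c
  have ha3eq : a 3 = a 2 ^ 2 + ((A:ℂ) - (B':ℂ)) * (c₂ - d₂) / (4 * (C3:ℂ)) := by
    have hC3ne : (4 * (C3:ℂ)) ≠ 0 := by
      simp only [ne_eq, mul_eq_zero]
      push_neg
      constructor
      · norm_num
      · exact_mod_cast hC3pos.ne'
    have hC3ne' : (C3:ℂ) ≠ 0 := by exact_mod_cast hC3pos.ne'
    field_simp
    linear_combination key3
  have hnc1 : ‖c₁‖ ^ 2 ≤ 1 := by nlinarith [norm_nonneg c₂]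
  have hnd1 : ‖d₁‖ = ‖c₁‖ := by rw [hd1c, norm_neg]
  -- |a2| ≤ (A - B')/C2
  have ha2n : ‖a 2‖ ≤ (A - B') / C2 := by
    have h1 := congrArg norm hE1
    rw [norm_mul, norm_mul] at h1
    have h2 : ‖((C2:ℝ):ℂ)‖ = C2 := by
      rw [Complex.norm_real, Real.norm_eq_abs, abs_of_pos hC2pos]
    have h3 : ‖((A:ℂ) - (B':ℂ))‖ = A - B' := by
      have : (A:ℂ) - (B':ℂ) = ((A - B' : ℝ):ℂ) := by push_cast; ring
      rw [this, Complex.norm_real, Real.norm_eq_abs, abs_of_pos hb1pos]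
    rw [h2, h3] at h1
    rw [le_div_iff₀ hC2pos, mul_comm]
    calc C2 * ‖a 2‖ = (A - B') * ‖c₁‖ := h1
      _ ≤ (A - B') * 1 := by
          apply mul_le_mul_of_nonneg_left hc1 hb1pos.le
      _ = A - B' := mul_one _
  have ha3n : ‖a 3‖ ≤ (A - B') / (2 * C3) + ((A - B') / C2) ^ 2 := by
    rw [ha3eq]
    have h3 : ‖((A:ℂ) - (B':ℂ))‖ = A - B' := by
      have : (A:ℂ) - (B':ℂ) = ((A - B' : ℝ):ℂ) := by push_cast; ring
      rw [this, Complex.norm_real, Real.norm_eq_abs, abs_of_pos hb1pos]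
    have hcd : ‖c₂ - d₂‖ ≤ 2 := by
      calc ‖c₂ - d₂‖ ≤ ‖c₂‖ + ‖d₂‖ := norm_sub_le _ _
        _ ≤ (1 - ‖c₁‖^2) + (1 - ‖d₁‖^2) := add_le_add hc2 hd2
        _ ≤ 2 := by nlinarith [norm_nonneg c₁, norm_nonneg d₁]
    have h4 : ‖(4 * (C3:ℂ))‖ = 4 * C3 := by
      rw [norm_mul, Complex.norm_real, Real.norm_eq_abs, abs_of_pos hC3pos]
      norm_num
    calc ‖a 2 ^ 2 + ((A:ℂ) - (B':ℂ)) * (c₂ - d₂) / (4 * (C3:ℂ))‖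
        ≤ ‖a 2 ^ 2‖ + ‖((A:ℂ) - (B':ℂ)) * (c₂ - d₂) / (4 * (C3:ℂ))‖ := norm_add_le _ _
      _ = ‖a 2‖^2 + (A - B') * ‖c₂ - d₂‖ / (4 * C3) := by
          rw [norm_pow, norm_div, norm_mul, h3, h4]
      _ ≤ ((A - B')/C2)^2 + (A - B') * 2 / (4 * C3) := by
          apply add_le_add
          · apply pow_le_pow_left₀ (norm_nonneg _) ha2n
          · apply div_le_div_of_nonneg_right ?_ (by positivity)
            exact mul_le_mul_of_nonneg_left hcd hb1pos.le
      _ = (A - B') / (2 * C3) + ((A - B')/C2)^2 := by ring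
  -- ### bound for a 2
  set T : ℝ := (A - B')^2 * (2*C3 - C2^2) + (A - B') * (1 + B') * C2^2 with hTdef
  clear_value T
  have hTpos : 0 < T := by
    rw [hTdef, hgap]
    nlinarith [mul_nonneg (mul_nonneg hb1pos.le hB1) (sq_nonneg C2),
      mul_pos (pow_pos hb1pos 2) (show (0:ℝ) < 1 + δ by linarith)]
  have key2 : ((2*T : ℝ) : ℂ) * a 2 ^ 2
      = (((A - B')^3 : ℝ) : ℂ) * ((c₂ + c₁^2) + (d₂ + d₁^2)) := by
    rw [hTdef]
    push_cast
    linear_combination ((A:ℂ) - (B':ℂ))^2 * hE2 + ((A:ℂ) - (B':ℂ))^2 * hE4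
      + 2*((A:ℂ) - (B':ℂ))*(1+(B':ℂ))*(((C2:ℝ):ℂ) * a 2 + ((A:ℂ) - (B':ℂ))*c₁) * hE1
      - ((A:ℂ) - (B':ℂ))^3*(1+(B':ℂ))*(d₁ - c₁) * hd1c
  have hsum2 : ‖(c₂ + c₁^2) + (d₂ + d₁^2)‖ ≤ 2 := by
    calc ‖(c₂ + c₁^2) + (d₂ + d₁^2)‖ ≤ ‖c₂ + c₁^2‖ + ‖d₂ + d₁^2‖ := norm_add_le _ _
      _ ≤ (‖c₂‖ + ‖c₁^2‖) + (‖d₂‖ + ‖d₁^2‖) := add_le_add (norm_add_le _ _) (norm_add_le _ _)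
      _ ≤ ((1 - ‖c₁‖^2) + ‖c₁‖^2) + ((1 - ‖d₁‖^2) + ‖d₁‖^2) := by
          rw [norm_pow, norm_pow]
          exact add_le_add (add_le_add hc2 le_rfl) (add_le_add hd2 le_rfl)
      _ = 2 := by ring
  have hT2 : T * ‖a 2‖^2 ≤ (A - B')^3 := by
    have h1 := congrArg norm key2
    rw [norm_mul, norm_mul, norm_pow, Complex.norm_real, Complex.norm_real,
      Real.norm_eq_abs, Real.norm_eq_abs, abs_of_pos (by linarith : (0:ℝ) < 2*T),
      abs_of_pos (by positivity : (0:ℝ) < (A - B')^3)] at h1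
    nlinarith [norm_nonneg ((c₂ + c₁^2) + (d₂ + d₁^2)), hsum2,
      (by positivity : (0:ℝ) < (A - B')^3)]
  set D : ℝ := (A - B') * (2 * C3 - C2 ^ 2) - (B' + 1) * C2 ^ 2 with hDdef
  clear_value D
  have hDabs : |D| ≤ (A - B') * (2 * C3 - C2 ^ 2) + (B' + 1) * C2 ^ 2 := by
    have hP : 0 ≤ (A - B') * (2 * C3 - C2 ^ 2) := by
      rw [hgap]; positivity
    have hQ : 0 ≤ (B' + 1) * C2 ^ 2 := mul_nonneg (by linarith) (sq_nonneg _)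
    rw [hDdef, abs_le]
    constructor <;> nlinarith
  have hDpos : 0 < |D| := abs_pos.mpr hden
  have hTD : T = (A - B') * ((A - B') * (2 * C3 - C2 ^ 2) + (B' + 1) * C2 ^ 2) := by
    rw [hTdef]; ring
  have hsqbound : ‖a 2‖^2 * |D| ≤ (A - B')^2 := by
    have h1 : ‖a 2‖^2 * ((A - B') * (2 * C3 - C2 ^ 2) + (B' + 1) * C2 ^ 2) ≤ (A - B')^2 := by
      have h2 : (A - B') * (‖a 2‖^2 * ((A - B') * (2 * C3 - C2 ^ 2) + (B' + 1) * C2 ^ 2))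
          ≤ (A - B') * (A - B')^2 := by
        calc (A - B') * (‖a 2‖^2 * ((A - B') * (2 * C3 - C2 ^ 2) + (B' + 1) * C2 ^ 2))
            = T * ‖a 2‖^2 := by rw [hTD]; ring
          _ ≤ (A - B')^3 := hT2
          _ = (A - B') * (A - B')^2 := by ring
      exact le_of_mul_le_mul_left h2 hb1pos
    calc ‖a 2‖^2 * |D| ≤ ‖a 2‖^2 * ((A - B') * (2 * C3 - C2 ^ 2) + (B' + 1) * C2 ^ 2) := by
          apply mul_le_mul_of_nonneg_left hDabs (by positivity)
      _ ≤ (A - B')^2 := h1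
  have ha2fin : ‖a 2‖ ≤ (A - B') / Real.sqrt |D| := by
    have h1 : ‖a 2‖^2 ≤ (A - B')^2 / |D| := by
      rw [le_div_iff₀ hDpos]; exact hsqbound
    calc ‖a 2‖ = Real.sqrt (‖a 2‖^2) := (Real.sqrt_sq (norm_nonneg _)).symm
      _ ≤ Real.sqrt ((A - B')^2 / |D|) := Real.sqrt_le_sqrt h1
      _ = Real.sqrt ((A - B')^2) / Real.sqrt |D| := Real.sqrt_div (sq_nonneg _) _
      _ = (A - B') / Real.sqrt |D| := by rw [Real.sqrt_sq hb1pos.le]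
  constructor
  · exact ha2fin
  · exact ha3n
end
end
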